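/- Let (τ_k)_{k≥1} be a sequence of i.i.d. random variables on a probability space with τ_k > 0 almost surely, common mean E[τ_1] = 1/p for some p ∈ (0,∞), and finite fourth moment E[τ_1⁴] < ∞. Let S_k = τ_1 + ⋯ + τ_k and, for t ≥ 1, let N(t) = #{ k ≥ 1 : S_k ≤ t } be the associated renewal counting process. Then for every ε > 0, Σ_{t=1}^∞ P( |N(t)/t − p| ≥ ε ) < ∞. -/

import Mathlib

open MeasureTheory ProbabilityTheory Finset
open scoped ENNReal

namespace RenewalAux

variable {Ω : Type*} [MeasurableSpace Ω] {μ : Measure Ω} [IsProbabilityMeasure μ]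

lemma integrable_pow_of_memL4 {f : Ω → ℝ} (hf : MemLp f 4 μ) {n : ℕ}
    (hn : n ≤ 4) : Integrable (fun ω => f ω ^ n) μ := by
  rcases Nat.eq_zero_or_pos n with h0 | h1
  · simp [h0]
  have hn0 : (n : ℝ≥0∞) ≠ 0 := by exact_mod_cast h1.ne'
  have hntop : (n : ℝ≥0∞) ≠ ⊤ := by simp
  have hfn : MemLp f (n : ℝ≥0∞) μ := hf.mono_exponent (by exact_mod_cast hn)
  have hiff := (memLp_norm_rpow_iff (p := (n : ℝ≥0∞)) (q := (n : ℝ≥0∞))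
    hfn.aestronglyMeasurable hn0 hntop).mpr hfn
  rw [ENNReal.div_self hn0 hntop, memLp_one_iff_integrable] at hiff
  have hmeas : AEStronglyMeasurable (fun ω => f ω ^ n) μ := by
    exact (hfn.aestronglyMeasurable.aemeasurable.pow_const n).aestronglyMeasurable
  refine hiff.mono' hmeas ?_
  · filter_upwards with ω
    simp [Real.norm_eq_abs, abs_pow, ENNReal.toReal_natCast, Real.rpow_natCast]

end RenewalAux

namespace RenewalAux

variable {Ω : Type*} [MeasurableSpace Ω] {μ : Measure Ω} [IsProbabilityMeasure μ]

lemma moments_sum (Y : ℕ → Ω → ℝ) (hYmeas : ∀ k, Measurable (Y k))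
    (hYindep : iIndepFun Y μ)
    (hL4 : ∀ k, MemLp (Y k) 4 μ)
    (hzero : ∀ k, ∫ ω, Y k ω ∂μ = 0)
    (σ2 σ4 : ℝ) (h2 : ∀ k, ∫ ω, (Y k ω) ^ 2 ∂μ = σ2)
    (h4 : ∀ k, ∫ ω, (Y k ω) ^ 4 ∂μ = σ4) (m : ℕ) :
    (∫ ω, (∑ j ∈ Finset.range m, Y j ω) ^ 2 ∂μ = m * σ2) ∧
    (∫ ω, (∑ j ∈ Finset.range m, Y j ω) ^ 4 ∂μ
      = m * σ4 + 3 * m * (m - 1) * σ2 ^ 2) := by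
  induction m with
  | zero => simp
  | succ m ih =>
    set S : Ω → ℝ := fun ω => ∑ j ∈ Finset.range m, Y j ω with hS
    have hSsum : (∑ j ∈ Finset.range m, Y j) = S := by
      funext ω; simp [hS, Finset.sum_apply]
    have hSL4 : MemLp S 4 μ := by
      rw [← hSsum]; exact memLp_finset_sum' _ (fun i _ => hL4 i)
    have hYL4 := hL4 m
    have hind : IndepFun S (Y m) μ := by
      rw [← hSsum]; exact hYindep.indepFun_sum_range_succ hYmeas m
    have iS : ∀ a : ℕ, a ≤ 4 → Integrable (fun ω => S ω ^ a) μ :=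
      fun a ha => integrable_pow_of_memL4 hSL4 ha
    have iY : ∀ a : ℕ, a ≤ 4 → Integrable (fun ω => Y m ω ^ a) μ :=
      fun a ha => integrable_pow_of_memL4 hYL4 ha
    have hindpow : ∀ a b : ℕ, IndepFun (fun ω => S ω ^ a) (fun ω => Y m ω ^ b) μ :=
      fun a b => hind.comp (measurable_id.pow_const a) (measurable_id.pow_const b)
    have iSY : ∀ a b : ℕ, a ≤ 4 → b ≤ 4 → Integrable (fun ω => S ω ^ a * Y m ω ^ b) μ :=
      fun a b ha hb => (hindpow a b).integrable_mul (iS a ha) (iY b hb)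
    have eSY : ∀ a b : ℕ, a ≤ 4 → b ≤ 4 →
        ∫ ω, S ω ^ a * Y m ω ^ b ∂μ = (∫ ω, S ω ^ a ∂μ) * ∫ ω, Y m ω ^ b ∂μ :=
      fun a b ha hb => (hindpow a b).integral_mul_eq_mul_integral (iS a ha).aestronglyMeasurable (iY b hb).aestronglyMeasurable
    have hS1 : ∫ ω, S ω ^ 1 ∂μ = 0 := by
      simp only [pow_one, hS]
      rw [integral_finset_sum _ (fun i _ => memLp_one_iff_integrable.mp
        ((hL4 i).mono_exponent (by norm_num)))]
      simp [hzero]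
    have hY1 : ∫ ω, Y m ω ^ 1 ∂μ = 0 := by simpa using hzero m
    have int11 : Integrable (fun ω => 2 * (S ω ^ 1 * Y m ω ^ 1)) μ :=
      (iSY 1 1 (by norm_num) (by norm_num)).const_mul 2
    have int31 : Integrable (fun ω => 4 * (S ω ^ 3 * Y m ω ^ 1)) μ :=
      (iSY 3 1 (by norm_num) (by norm_num)).const_mul 4
    have int22 : Integrable (fun ω => 6 * (S ω ^ 2 * Y m ω ^ 2)) μ :=
      (iSY 2 2 (by norm_num) (by norm_num)).const_mul 6
    have int13 : Integrable (fun ω => 4 * (S ω ^ 1 * Y m ω ^ 3)) μ :=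
      (iSY 1 3 (by norm_num) (by norm_num)).const_mul 4
    have g2 : Integrable (fun ω => 2 * (S ω ^ 1 * Y m ω ^ 1) + Y m ω ^ 2) μ :=
      int11.add (iY 2 (by norm_num))
    have g13 : Integrable (fun ω => 4 * (S ω ^ 1 * Y m ω ^ 3) + Y m ω ^ 4) μ :=
      int13.add (iY 4 (by norm_num))
    have g22 : Integrable (fun ω => 6 * (S ω ^ 2 * Y m ω ^ 2) + (4 * (S ω ^ 1 * Y m ω ^ 3) + Y m ω ^ 4)) μ :=
      int22.add g13
    have g31 : Integrable (fun ω => 4 * (S ω ^ 3 * Y m ω ^ 1) + (6 * (S ω ^ 2 * Y m ω ^ 2) + (4 * (S ω ^ 1 * Y m ω ^ 3) + Y m ω ^ 4))) μ :=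
      int31.add g22
    have e2 : ∫ ω, (∑ j ∈ Finset.range (m + 1), Y j ω) ^ 2 ∂μ = ((m : ℝ) + 1) * σ2 := by
      have heq : (fun ω => (∑ j ∈ Finset.range (m + 1), Y j ω) ^ 2)
          = fun ω => S ω ^ 2 + (2 * (S ω ^ 1 * Y m ω ^ 1) + Y m ω ^ 2) := by
        funext ω; rw [Finset.sum_range_succ]; simp only [hS]; ring
      rw [heq, integral_add (iS 2 (by norm_num)) g2,
        integral_add int11 (iY 2 (by norm_num)), integral_const_mul,
        eSY 1 1 (by norm_num) (by norm_num), hS1, hY1, ih.1, h2]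
      ring
    have e4 : ∫ ω, (∑ j ∈ Finset.range (m + 1), Y j ω) ^ 4 ∂μ
        = ((m : ℝ) + 1) * σ4 + 3 * ((m : ℝ) + 1) * (((m : ℝ) + 1) - 1) * σ2 ^ 2 := by
      have heq : (fun ω => (∑ j ∈ Finset.range (m + 1), Y j ω) ^ 4)
          = fun ω => S ω ^ 4 + (4 * (S ω ^ 3 * Y m ω ^ 1) + (6 * (S ω ^ 2 * Y m ω ^ 2)
              + (4 * (S ω ^ 1 * Y m ω ^ 3) + Y m ω ^ 4))) := by
        funext ω; rw [Finset.sum_range_succ]; simp only [hS]; ring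
      rw [heq, integral_add (iS 4 (by norm_num)) g31,
        integral_add int31 g22,
        integral_add int22 g13,
        integral_add int13 (iY 4 (by norm_num)),
        integral_const_mul, integral_const_mul, integral_const_mul,
        eSY 3 1 (by norm_num) (by norm_num), eSY 2 2 (by norm_num) (by norm_num),
        eSY 1 3 (by norm_num) (by norm_num), hS1, hY1, ih.1, ih.2, h2, h4]
      ring
    constructor
    · push_cast; exact e2
    · push_cast; exact e4

end RenewalAux

namespace RenewalAux

variable {Ω : Type*} [MeasurableSpace Ω] {μ : Measure Ω} [IsProbabilityMeasure μ]

lemma meas_abs_pow_ge {f : Ω → ℝ} (hf : Integrable (fun ω => f ω ^ 4) μ) {a : ℝ}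
    (ha : 0 < a) :
    μ {ω | a ≤ |f ω|} ≤ ENNReal.ofReal ((∫ ω, f ω ^ 4 ∂μ) / a ^ 4) := by
  have hsub : {ω | a ≤ |f ω|} ⊆ {ω | a ^ 4 ≤ f ω ^ 4} := by
    intro ω hω
    have h1 : a ^ 4 ≤ |f ω| ^ 4 := pow_le_pow_left₀ ha.le hω 4
    calc a ^ 4 ≤ |f ω| ^ 4 := h1
      _ = |f ω ^ 4| := (abs_pow _ _).symm
      _ = f ω ^ 4 := abs_of_nonneg (by positivity)
  have hmar := mul_meas_ge_le_integral_of_nonneg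
    (Filter.Eventually.of_forall (fun ω => by positivity : ∀ ω, (0:ℝ) ≤ f ω ^ 4)) hf (a ^ 4)
  have hne : μ {ω | a ^ 4 ≤ f ω ^ 4} ≠ ⊤ := measure_ne_top _ _
  have htoReal : (μ {ω | a ^ 4 ≤ f ω ^ 4}).toReal ≤ (∫ ω, f ω ^ 4 ∂μ) / a ^ 4 := by
    rw [le_div_iff₀ (by positivity)]
    rw [measureReal_def] at hmar
    linarith [hmar]
  calc μ {ω | a ≤ |f ω|} ≤ μ {ω | a ^ 4 ≤ f ω ^ 4} := measure_mono hsub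
    _ = ENNReal.ofReal ((μ {ω | a ^ 4 ≤ f ω ^ 4}).toReal) := (ENNReal.ofReal_toReal hne).symm
    _ ≤ ENNReal.ofReal ((∫ ω, f ω ^ 4 ∂μ) / a ^ 4) := ENNReal.ofReal_le_ofReal htoReal

end RenewalAux

open RenewalAux in
set_option maxHeartbeats 2000000 in
/-- Renewal processes satisfy the summable concentration condition: if the i.i.d. renewal
intervals are a.s. positive with mean `1/p` and finite fourth moment, then for every `ε > 0`,
`Σ_{t=1}^∞ P(|N(t)/t − p| ≥ ε) < ∞`, where `N(t) = #{k ≥ 1 : S_k ≤ t}` is the renewal counting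
process with `S_k = τ_1 + ⋯ + τ_k`. -/

theorem stmt14 {Ω : Type*} [MeasurableSpace Ω] (μ : Measure Ω) [IsProbabilityMeasure μ]
    (τ : ℕ → Ω → ℝ) (hmeas : ∀ k, Measurable (τ k))
    (hindep : iIndepFun τ μ)
    (hident : ∀ k, IdentDistrib (τ k) (τ 0) μ μ)
    (hpos : ∀ k, ∀ᵐ ω ∂μ, 0 < τ k ω)
    (p : ℝ) (hp : 0 < p) (hmean : ∫ ω, τ 0 ω ∂μ = 1 / p)
    (hmom : Integrable (fun ω => (τ 0 ω) ^ 4) μ)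
    (ε : ℝ) (hε : 0 < ε) :
    (∑' t : ℕ,
        μ {ω | ε ≤
          |((sSup {k : ℕ | 1 ≤ k ∧ ∑ j ∈ Finset.range k, τ j ω ≤ ((t : ℝ) + 1)} : ℕ) : ℝ) /
              ((t : ℝ) + 1) - p|}) ≠ ⊤ := by
  classical
  set c : ℝ := 1 / p with hc_def
  have hc : 0 < c := by positivity
  -- L⁴ membership of τ 0
  have hτ0L4 : MemLp (τ 0) 4 μ := by
    refine (memLp_norm_rpow_iff (p := (4 : ℝ≥0∞)) (q := (4 : ℝ≥0∞))
      (hmeas 0).aestronglyMeasurable (by norm_num) (by norm_num)).mp ?_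
    have heq : (fun x => ‖τ 0 x‖ ^ ((4 : ℝ≥0∞)).toReal) = fun x => τ 0 x ^ 4 := by
      funext x
      have h4 : ((4 : ℝ≥0∞)).toReal = ((4 : ℕ) : ℝ) := by simp
      rw [h4, Real.rpow_natCast, Real.norm_eq_abs, ← abs_pow, abs_of_nonneg (by positivity)]
    have hdiv : (4 : ℝ≥0∞) / 4 = 1 := by
      rw [ENNReal.div_self (by norm_num) (by norm_num)]
    rw [hdiv, heq, memLp_one_iff_integrable]
    exact hmom
  have hτL4 : ∀ k, MemLp (τ k) 4 μ := fun k => (hident k).symm.memLp_snd hτ0L4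
  -- centered variables
  set Y : ℕ → Ω → ℝ := fun k ω => τ k ω - c with hY_def
  have hYmeas : ∀ k, Measurable (Y k) := fun k => (hmeas k).sub measurable_const
  have hYindep : iIndepFun Y μ :=
    hindep.comp (fun _ => fun x => x - c) (fun _ => measurable_id.sub_const c)
  have hYident : ∀ k, IdentDistrib (Y k) (Y 0) μ μ := fun k =>
    (hident k).comp (measurable_id.sub_const c)
  have hYL4 : ∀ k, MemLp (Y k) 4 μ := fun k => (hτL4 k).sub (memLp_const c)
  have hτint : ∀ k, Integrable (τ k) μ := fun k =>
    memLp_one_iff_integrable.mp ((hτL4 k).mono_exponent (by norm_num))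
  have hτmean : ∀ k, ∫ ω, τ k ω ∂μ = c := fun k => by
    rw [(hident k).integral_eq, hmean]
  have hYzero : ∀ k, ∫ ω, Y k ω ∂μ = 0 := fun k => by
    rw [hY_def]
    rw [integral_sub (hτint k) (integrable_const c), hτmean k, integral_const]
    simp
  set σ2 : ℝ := ∫ ω, Y 0 ω ^ 2 ∂μ with hσ2_def
  set σ4 : ℝ := ∫ ω, Y 0 ω ^ 4 ∂μ with hσ4_def
  have h2 : ∀ k, ∫ ω, Y k ω ^ 2 ∂μ = σ2 := fun k =>
    ((hYident k).comp (measurable_id.pow_const 2)).integral_eq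
  have h4 : ∀ k, ∫ ω, Y k ω ^ 4 ∂μ = σ4 := fun k =>
    ((hYident k).comp (measurable_id.pow_const 4)).integral_eq
  have hσ2 : 0 ≤ σ2 := integral_nonneg (fun ω => by positivity)
  have hσ4 : 0 ≤ σ4 := integral_nonneg (fun ω => by positivity)
  set K : ℝ := σ4 + 3 * σ2 ^ 2 with hK_def
  have hK : 0 ≤ K := by positivity
  have hmom4 := moments_sum Y hYmeas hYindep hYL4 hYzero σ2 σ4 h2 h4
  -- sums are in L⁴
  have hsumL4 : ∀ m : ℕ, MemLp (fun ω => ∑ j ∈ Finset.range m, Y j ω) 4 μ := by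
    intro m
    have h := memLp_finset_sum' (μ := μ) (p := 4) (Finset.range m) (fun i _ => hYL4 i)
    have e : (∑ i ∈ Finset.range m, Y i) = fun ω => ∑ j ∈ Finset.range m, Y j ω := by
      funext ω; simp
    rwa [e] at h
  -- fourth-moment bound
  have bound4 : ∀ m : ℕ, ∫ ω, (∑ j ∈ Finset.range m, Y j ω) ^ 4 ∂μ ≤ K * (m : ℝ) ^ 2 := by
    intro m
    rw [(hmom4 m).2]
    have hm0 : (0 : ℝ) ≤ (m : ℝ) := Nat.cast_nonneg m
    have hm1 : (m : ℝ) ≤ (m : ℝ) ^ 2 := by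
      have : m ≤ m ^ 2 := Nat.le_self_pow (by norm_num) m
      exact_mod_cast this
    nlinarith [sq_nonneg ((m:ℝ) - 1), sq_nonneg (m:ℝ)]
  -- deviation bound
  have dev : ∀ (m : ℕ) (a : ℝ), 0 < a →
      μ {ω | a ≤ |∑ j ∈ Finset.range m, τ j ω - m * c|}
        ≤ ENNReal.ofReal (K * (m : ℝ) ^ 2 / a ^ 4) := by
    intro m a ha
    have hset : {ω | a ≤ |∑ j ∈ Finset.range m, τ j ω - m * c|}
        = {ω | a ≤ |∑ j ∈ Finset.range m, Y j ω|} := by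
      ext ω
      have : ∑ j ∈ Finset.range m, τ j ω - (m : ℝ) * c = ∑ j ∈ Finset.range m, Y j ω := by
        rw [hY_def]
        rw [Finset.sum_sub_distrib]
        simp [Finset.card_range, mul_comm]
      simp only [Set.mem_setOf_eq, this]
    have hint : Integrable (fun ω => (∑ j ∈ Finset.range m, Y j ω) ^ 4) μ :=
      integrable_pow_of_memL4 (hsumL4 m) le_rfl
    rw [hset]
    refine le_trans (meas_abs_pow_ge hint ha) (ENNReal.ofReal_le_ofReal ?_)
    exact div_le_div_of_nonneg_right (bound4 m) (by positivity) |>.trans_eq rfl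
  -- constants
  set ε' : ℝ := min ε (p / 2) with hε'_def
  have hε'pos : 0 < ε' := lt_min hε (by positivity)
  have hε'le : ε' ≤ ε := min_le_left _ _
  set C1 : ℝ := K * (p + ε' + 1) ^ 2 * p ^ 4 / ε' ^ 4 with hC1_def
  set C2 : ℝ := K * (p + 1) ^ 2 * (2 * p) ^ 4 / ε' ^ 4 with hC2_def
  set C : ℝ := (2 / ε') ^ 2 + C1 + C2 with hC_def
  have hC1 : 0 ≤ C1 := by
    apply div_nonneg _ (by positivity)
    exact mul_nonneg (mul_nonneg hK (sq_nonneg _)) (by positivity)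
  have hC2 : 0 ≤ C2 := by
    apply div_nonneg _ (by positivity)
    exact mul_nonneg (mul_nonneg hK (sq_nonneg _)) (by positivity)
  have hC : 0 ≤ C := by positivity
  have hpos_all : ∀ᵐ ω ∂μ, ∀ k, 0 < τ k ω := ae_all_iff.mpr hpos
  -- the key pointwise-in-t bound
  have key : ∀ t : ℕ,
      μ {ω | ε ≤
          |((sSup {k : ℕ | 1 ≤ k ∧ ∑ j ∈ Finset.range k, τ j ω ≤ ((t : ℝ) + 1)} : ℕ) : ℝ) /
              ((t : ℝ) + 1) - p|} ≤ ENNReal.ofReal (C / ((t : ℝ) + 1) ^ 2) := by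
    intro t
    set T : ℝ := (t : ℝ) + 1 with hT_def
    have hT1 : 1 ≤ T := by rw [hT_def]; have := Nat.cast_nonneg (α := ℝ) t; linarith
    have hT0 : 0 < T := by linarith
    set m₁ : ℕ := ⌈(p + ε') * T⌉₊ with hm₁_def
    set m₂ : ℕ := ⌊(p - ε') * T⌋₊ + 1 with hm₂_def
    have hm₁1 : 1 ≤ m₁ := Nat.one_le_ceil_iff.mpr (by positivity)
    have hm₂1 : 1 ≤ m₂ := Nat.le_add_left 1 _
    -- a.e. inclusion into union of two deviation events
    have hincl : μ {ω | ε ≤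
          |((sSup {k : ℕ | 1 ≤ k ∧ ∑ j ∈ Finset.range k, τ j ω ≤ T} : ℕ) : ℝ) / T - p|}
        ≤ μ {ω | ∑ j ∈ Finset.range m₁, τ j ω ≤ T}
          + μ {ω | T < ∑ j ∈ Finset.range m₂, τ j ω} := by
      set Abad := {ω | ε ≤
          |((sSup {k : ℕ | 1 ≤ k ∧ ∑ j ∈ Finset.range k, τ j ω ≤ T} : ℕ) : ℝ) / T - p|}
      set G1 := {ω | ∑ j ∈ Finset.range m₁, τ j ω ≤ T}
      set G2 := {ω | T < ∑ j ∈ Finset.range m₂, τ j ω}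
      set Nbad := {ω | ¬ ∀ k, 0 < τ k ω}
      have hNnull : μ Nbad = 0 := by
        rw [← ae_iff] at *
        exact hpos_all
      have hsubset : Abad ⊆ (G1 ∪ G2) ∪ Nbad := by
        intro ω hω
        by_cases hωpos : ∀ k, 0 < τ k ω
        swap
        · exact Or.inr hωpos
        left
        have hmono : ∀ {a b : ℕ}, a ≤ b →
            ∑ j ∈ Finset.range a, τ j ω ≤ ∑ j ∈ Finset.range b, τ j ω := fun hab =>
          Finset.sum_le_sum_of_subset_of_nonneg (Finset.range_subset_range.mpr hab)
            (fun i _ _ => (hωpos i).le)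
        set A := {k : ℕ | 1 ≤ k ∧ ∑ j ∈ Finset.range k, τ j ω ≤ T} with hA_def
        have hmem : ε ≤ |((sSup A : ℕ) : ℝ) / T - p| := hω
        by_cases hbdd : BddAbove A
        · set N := sSup A with hN_def
          have hε'mem : ε' ≤ |(N : ℝ) / T - p| := le_trans hε'le hmem
          rcases le_abs.mp hε'mem with h1 | h1
          · -- upper deviation : N ≥ (p+ε')T
            have hNge : (p + ε') * T ≤ (N : ℝ) := by
              rw [← le_div_iff₀ hT0]
              linarith
            have hm₁N : m₁ ≤ N := Nat.ceil_le.mpr hNge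
            have hANe : A.Nonempty := by
              by_contra h
              rw [Set.not_nonempty_iff_eq_empty] at h
              have hN0 : N = 0 := by rw [hN_def, h]; exact csSup_empty
              omega
            have hNA : N ∈ A := Nat.sSup_mem hANe hbdd
            exact Or.inl (le_trans (hmono hm₁N) hNA.2)
          · -- lower deviation : N ≤ (p-ε')T
            have hNle : (N : ℝ) ≤ (p - ε') * T := by
              have hdiv : (N : ℝ) / T ≤ p - ε' := by linarith
              calc (N : ℝ) = ((N : ℝ) / T) * T := by field_simp
                _ ≤ (p - ε') * T := mul_le_mul_of_nonneg_right hdiv hT0.le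
            have hNm₂ : N < m₂ := by
              have hcast : (N : ℝ) < (m₂ : ℕ) := by
                refine lt_of_le_of_lt hNle ?_
                rw [hm₂_def]
                push_cast
                exact Nat.lt_floor_add_one _
              exact_mod_cast hcast
            have hG2 : T < ∑ j ∈ Finset.range m₂, τ j ω := by
              by_contra h
              push_neg at h
              have hm₂A : m₂ ∈ A := ⟨hm₂1, h⟩
              exact absurd (le_csSup hbdd hm₂A) (by omega)
            exact Or.inr hG2
        · -- unbounded: arbitrarily large k with partial sum ≤ T
          rw [not_bddAbove_iff] at hbdd
          obtain ⟨k, hkA, hk⟩ := hbdd m₁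
          exact Or.inl (le_trans (hmono hk.le) hkA.2)
      calc μ Abad ≤ μ ((G1 ∪ G2) ∪ Nbad) := measure_mono hsubset
        _ ≤ μ (G1 ∪ G2) + μ Nbad := measure_union_le _ _
        _ = μ (G1 ∪ G2) := by rw [hNnull, add_zero]
        _ ≤ μ G1 + μ G2 := measure_union_le _ _
    -- bound for the first event, valid for all T ≥ 1
    have hbA : μ {ω | ∑ j ∈ Finset.range m₁, τ j ω ≤ T} ≤ ENNReal.ofReal (C1 / T ^ 2) := by
      have hsub2 : {ω | ∑ j ∈ Finset.range m₁, τ j ω ≤ T}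
          ⊆ {ω | ε' * T / p ≤ |∑ j ∈ Finset.range m₁, τ j ω - m₁ * c|} := by
        intro ω hω
        have h1 : (p + ε') * T ≤ (m₁ : ℝ) := Nat.le_ceil _
        have h3 : T + ε' * T / p ≤ (m₁ : ℝ) * c := by
          have h2 : ((p + ε') * T) / p ≤ (m₁ : ℝ) / p :=
            div_le_div_of_nonneg_right h1 hp.le
          have h4 : (m₁ : ℝ) * c = (m₁ : ℝ) / p := by rw [hc_def]; ring
          rw [h4]
          refine le_trans (le_of_eq ?_) h2
          field_simp
        have hω' : ∑ j ∈ Finset.range m₁, τ j ω ≤ T := hω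
        have : ε' * T / p ≤ (m₁ : ℝ) * c - ∑ j ∈ Finset.range m₁, τ j ω := by linarith
        calc ε' * T / p ≤ (m₁ : ℝ) * c - ∑ j ∈ Finset.range m₁, τ j ω := this
          _ ≤ |∑ j ∈ Finset.range m₁, τ j ω - (m₁ : ℝ) * c| := by
            rw [abs_sub_comm]; exact le_abs_self _
      refine le_trans (measure_mono hsub2)
        (le_trans (dev m₁ (ε' * T / p) (by positivity)) (ENNReal.ofReal_le_ofReal ?_))
      have hm₁ub : (m₁ : ℝ) ≤ (p + ε' + 1) * T := by
        have hceil : (m₁ : ℝ) < (p + ε') * T + 1 :=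
          Nat.ceil_lt_add_one (by positivity)
        nlinarith
      rw [div_le_div_iff₀ (by positivity) (by positivity)]
      have expand : C1 * (ε' * T / p) ^ 4 = K * (p + ε' + 1) ^ 2 * T ^ 4 := by
        rw [hC1_def]
        field_simp
      rw [expand]
      have h5 : (m₁ : ℝ) ^ 2 ≤ ((p + ε' + 1) * T) ^ 2 :=
        pow_le_pow_left₀ (Nat.cast_nonneg _) hm₁ub 2
      calc K * (m₁ : ℝ) ^ 2 * T ^ 2 ≤ K * ((p + ε' + 1) * T) ^ 2 * T ^ 2 :=
          mul_le_mul_of_nonneg_right (mul_le_mul_of_nonneg_left h5 hK) (sq_nonneg T)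
        _ = K * (p + ε' + 1) ^ 2 * T ^ 4 := by ring
    rcases le_or_gt T (2 / ε') with hTsmall | hTbig
    · -- small T : use trivial bound 1
      refine le_trans prob_le_one ?_
      rw [← ENNReal.ofReal_one]
      apply ENNReal.ofReal_le_ofReal
      rw [le_div_iff₀ (by positivity)]
      have hTsq : T ^ 2 ≤ (2 / ε') ^ 2 := pow_le_pow_left₀ hT0.le hTsmall 2
      rw [hC_def]
      linarith
    · -- large T : both deviation bounds
      have hbB : μ {ω | T < ∑ j ∈ Finset.range m₂, τ j ω} ≤ ENNReal.ofReal (C2 / T ^ 2) := by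
        have hε'p2 : ε' ≤ p / 2 := by rw [hε'_def]; exact min_le_right _ _
        have hpε' : 0 < p - ε' := by linarith
        have hm₂ub : (m₂ : ℝ) ≤ (p - ε') * T + 1 := by
          rw [hm₂_def]
          push_cast
          have hfl := Nat.floor_le (show (0:ℝ) ≤ (p - ε') * T from (mul_pos hpε' hT0).le)
          linarith
        have hε'T : 2 < ε' * T := by
          have h := (div_lt_iff₀ hε'pos).mp hTbig
          nlinarith [h]
        have hsubB : {ω | T < ∑ j ∈ Finset.range m₂, τ j ω}
            ⊆ {ω | ε' * T / (2 * p) ≤ |∑ j ∈ Finset.range m₂, τ j ω - m₂ * c|} := by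
          intro ω hω
          have hω' : T < ∑ j ∈ Finset.range m₂, τ j ω := hω
          have h1 : (m₂ : ℝ) * c ≤ T - ε' * T / p + 1 / p := by
            have h2 : (m₂ : ℝ) * c = (m₂ : ℝ) / p := by rw [hc_def]; ring
            rw [h2]
            have h3 : (m₂ : ℝ) / p ≤ ((p - ε') * T + 1) / p :=
              div_le_div_of_nonneg_right hm₂ub hp.le
            refine le_trans h3 (le_of_eq ?_)
            field_simp
          have h4 : ε' * T / (2 * p) ≤ ε' * T / p - 1 / p := by
            have hkey : ε' * T / p - 1 / p - ε' * T / (2 * p) = (ε' * T - 2) / (2 * p) := by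
              field_simp
              ring
            have hnn2 : (0:ℝ) ≤ (ε' * T - 2) / (2 * p) :=
              div_nonneg (by linarith) (by positivity)
            linarith
          have h5 : ε' * T / (2 * p) ≤ ∑ j ∈ Finset.range m₂, τ j ω - (m₂ : ℝ) * c := by
            linarith
          exact Set.mem_setOf_eq ▸ le_trans h5 (le_abs_self _)
        refine le_trans (measure_mono hsubB)
          (le_trans (dev m₂ (ε' * T / (2 * p)) (by positivity)) (ENNReal.ofReal_le_ofReal ?_))
        have hm₂ub2 : (m₂ : ℝ) ≤ (p + 1) * T := by
          nlinarith [hm₂ub, mul_pos hε'pos hT0, hT1]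
        rw [div_le_div_iff₀ (by positivity) (by positivity)]
        have expand2 : C2 * (ε' * T / (2 * p)) ^ 4 = K * (p + 1) ^ 2 * T ^ 4 := by
          rw [hC2_def]
          field_simp
        rw [expand2]
        have h6 : (m₂ : ℝ) ^ 2 ≤ ((p + 1) * T) ^ 2 :=
          pow_le_pow_left₀ (Nat.cast_nonneg _) hm₂ub2 2
        calc K * (m₂ : ℝ) ^ 2 * T ^ 2 ≤ K * ((p + 1) * T) ^ 2 * T ^ 2 :=
            mul_le_mul_of_nonneg_right (mul_le_mul_of_nonneg_left h6 hK) (sq_nonneg T)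
          _ = K * (p + 1) ^ 2 * T ^ 4 := by ring
      calc μ {ω | ε ≤
          |((sSup {k : ℕ | 1 ≤ k ∧ ∑ j ∈ Finset.range k, τ j ω ≤ T} : ℕ) : ℝ) / T - p|}
          ≤ μ {ω | ∑ j ∈ Finset.range m₁, τ j ω ≤ T}
            + μ {ω | T < ∑ j ∈ Finset.range m₂, τ j ω} := hincl
        _ ≤ ENNReal.ofReal (C1 / T ^ 2) + ENNReal.ofReal (C2 / T ^ 2) := add_le_add hbA hbB
        _ = ENNReal.ofReal (C1 / T ^ 2 + C2 / T ^ 2) :=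
            (ENNReal.ofReal_add (by positivity) (by positivity)).symm
        _ ≤ ENNReal.ofReal (C / T ^ 2) := by
            apply ENNReal.ofReal_le_ofReal
            rw [hC_def]
            have : (0:ℝ) ≤ (2 / ε') ^ 2 / T ^ 2 := by positivity
            rw [add_div, add_div]
            linarith
  -- summation
  have hsumm : Summable (fun t : ℕ => C / ((t : ℝ) + 1) ^ 2) := by
    have h1 : Summable (fun n : ℕ => 1 / ((n : ℝ)) ^ 2) :=
      Real.summable_one_div_nat_pow.mpr one_lt_two
    have h2 := (summable_nat_add_iff 1).mpr h1
    have h3 : Summable (fun n : ℕ => 1 / ((n : ℝ) + 1) ^ 2) := by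
      convert h2 using 2 with n
      rfl
      push_cast
      ring
    have h4 := h3.mul_left C
    convert h4 using 2 with n
    rfl
    ring
  have hnn : ∀ t : ℕ, 0 ≤ C / ((t : ℝ) + 1) ^ 2 := fun t => by positivity
  refine ne_top_of_le_ne_top (ENNReal.ofReal_ne_top
    (r := ∑' t : ℕ, C / ((t : ℝ) + 1) ^ 2)) ?_
  calc (∑' t : ℕ, μ {ω | ε ≤
          |((sSup {k : ℕ | 1 ≤ k ∧ ∑ j ∈ Finset.range k, τ j ω ≤ ((t : ℝ) + 1)} : ℕ) : ℝ) /
              ((t : ℝ) + 1) - p|})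
      ≤ ∑' t : ℕ, ENNReal.ofReal (C / ((t : ℝ) + 1) ^ 2) := ENNReal.tsum_le_tsum key
    _ = ENNReal.ofReal (∑' t : ℕ, C / ((t : ℝ) + 1) ^ 2) :=
        (ENNReal.ofReal_tsum_of_nonneg hnn hsumm).symm
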